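/- Let (A, Ã) be a dual pair of closed densely defined operators on a complex Hilbert space H with the common core property (common core D), with A dissipative, and let V := ((A − Ã)/(2i))↾_D be its imaginary part. Let W_F = V_F^{1/2} and W_K = V_K^{1/2} be the square roots of the Friedrichs and Kreĭn–von Neumann extensions of V. Let 𝒱 ⊆ D(Ã*) with 𝒱 ∩ D(A) = {0} and L : 𝒱 → H linear, and assume Lv ∈ ran(W_F) for every v ∈ 𝒱. If the extension A_{𝒱,L} (domain D(A) ∔ 𝒱, acting as f + v ↦ Ã*(f+v) + Lv) is dissipative, then 𝒱 ⊆ D(W_K). -/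

import Mathlib

noncomputable section

open Complex

variable {H : Type*} [NormedAddCommGroup H] [InnerProductSpace ℂ H] [CompleteSpace H]

local notation "⟪" x ", " y "⟫" => @inner ℂ _ _ x y

/-- A partially defined operator is *dissipative* if `Im ⟪ψ, A ψ⟫ ≥ 0` for all `ψ` in its
domain. -/
def Dissipative (A : H →ₗ.[ℂ] H) : Prop :=
  ∀ ψ : A.domain, 0 ≤ (⟪(ψ : H), A ψ⟫).im

/-- A partially defined operator is *symmetric* if `⟪f, S g⟫ = ⟪S f, g⟫` on its domain. -/
def IsSymmetricP (S : H →ₗ.[ℂ] H) : Prop :=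
  ∀ f g : S.domain, ⟪(f : H), S g⟫ = ⟪S f, (g : H)⟫

/-- A partially defined operator is *non-negative* if `⟪f, V f⟫` is real and `≥ 0` on its
domain. -/
def NonnegP (V : H →ₗ.[ℂ] H) : Prop :=
  ∀ f : V.domain, (⟪(f : H), V f⟫).im = 0 ∧ 0 ≤ (⟪(f : H), V f⟫).re

/-- `T = W ∘ W` as partially defined operators: the domain of `T` is
`{x ∈ D(W) : W x ∈ D(W)}` and there `T x = W (W x)`. -/
def IsSqrtOf (W T : H →ₗ.[ℂ] H) : Prop :=
  (∀ x : H, x ∈ T.domain ↔ ∃ hx : x ∈ W.domain, W ⟨x, hx⟩ ∈ W.domain) ∧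
  ∀ (x : H) (hxT : x ∈ T.domain) (hxW : x ∈ W.domain) (hWx : W ⟨x, hxW⟩ ∈ W.domain),
    T ⟨x, hxT⟩ = W ⟨W ⟨x, hxW⟩, hWx⟩

/-- The Ando–Nishio supremum `sup { |⟪h, V f⟫|² / ⟪f, V f⟫ : f ∈ D(V), V f ≠ 0 }`,
computed in `[0, ∞]`. -/
def anSup (V : H →ₗ.[ℂ] H) (h : H) : ENNReal :=
  ⨆ f : {f : V.domain // V f ≠ 0},
    ENNReal.ofReal (‖⟪h, V f.1⟫‖ ^ 2) / ENNReal.ofReal ((⟪(f.1 : H), V f.1⟫).re)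

/-- `W` is the square root of the Friedrichs extension of `V`: `W` is a non-negative
selfadjoint operator, `W ∘ W` is a non-negative selfadjoint extension of `V`, and `D(V)` is a
core for `W`. -/
def IsFriedrichsSqrt (V W : H →ₗ.[ℂ] H) : Prop :=
  IsSelfAdjoint W ∧ NonnegP W ∧
    (∃ T : H →ₗ.[ℂ] H, IsSqrtOf W T ∧ IsSelfAdjoint T ∧ NonnegP T ∧ V ≤ T) ∧
    (W.domRestrict V.domain).closure = W

/-- `W` is the square root of the Kreĭn–von Neumann extension of `V` (Ando–Nishio
characterization): `W` is a non-negative selfadjoint operator, `W ∘ W` is a non-negative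
selfadjoint extension of `V`, the domain of `W` consists exactly of those `h` with
`anSup V h < ∞`, and `‖W h‖² = anSup V h` there. -/
def IsKreinSqrt (V W : H →ₗ.[ℂ] H) : Prop :=
  IsSelfAdjoint W ∧ NonnegP W ∧
    (∃ T : H →ₗ.[ℂ] H, IsSqrtOf W T ∧ IsSelfAdjoint T ∧ NonnegP T ∧ V ≤ T) ∧
    (∀ h : H, h ∈ W.domain ↔ anSup V h < ⊤) ∧
    ∀ (h : H) (hh : h ∈ W.domain), ENNReal.ofReal (‖W ⟨h, hh⟩‖ ^ 2) = anSup V h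


private lemma aux_quadratic (q B G K : ℝ) (hq : 0 ≤ q) (hB : 0 ≤ B) (hG : 0 ≤ G)
    (h : ∀ s : ℝ, 0 < s → 2 * s * B ≤ s ^ 2 * q + s * Real.sqrt q * G + K) :
    B ^ 2 ≤ (G + Real.sqrt (max K 0)) ^ 2 * q := by
  rcases hq.eq_or_lt with hq0 | hq0
  · have hB0 : B = 0 := by
      by_contra hB0
      have hBpos : 0 < B := hB.lt_of_ne (Ne.symm hB0)
      have h1 := h ((|K| + 1) / B) (by positivity)
      have h2 : 2 * ((|K| + 1) / B) * B = 2 * (|K| + 1) := by field_simp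
      rw [h2, ← hq0] at h1
      simp only [mul_zero, Real.sqrt_zero, zero_mul, zero_add, mul_zero] at h1
      nlinarith [le_abs_self K, abs_nonneg K]
    rw [hB0, ← hq0]; simp
  · rcases hB.eq_or_lt with hB0 | hBpos
    · rw [← hB0]
      simpa using mul_nonneg (sq_nonneg (G + Real.sqrt (max K 0))) hq
    · set r := Real.sqrt q with hr
      have hrpos : 0 < r := Real.sqrt_pos.mpr hq0
      have hrne : r ≠ 0 := hrpos.ne'
      have hrr : r * r = q := Real.mul_self_sqrt hq
      have h1 := h (B / q) (by positivity)
      have e1 : 2 * (B / q) * B = 2 * (B / r) ^ 2 := by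
        rw [← hrr]; field_simp
      have e2 : (B / q) ^ 2 * q = (B / r) ^ 2 := by
        rw [← hrr]; field_simp
      have e3 : B / q * r * G = B / r * G := by
        rw [← hrr]; field_simp
      rw [e1, e2, e3] at h1
      set x := B / r with hx
      have hxpos : 0 < x := by positivity
      have hx2 : x ^ 2 ≤ G * x + max K 0 := by nlinarith [le_max_left K (0 : ℝ)]
      have hsK : Real.sqrt (max K 0) * Real.sqrt (max K 0) = max K 0 :=
        Real.mul_self_sqrt (le_max_right _ _)
      have hxle : x ≤ G + Real.sqrt (max K 0) := by
        by_contra hcon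
        push_neg at hcon
        have h4 : Real.sqrt (max K 0) ≤ x :=
          le_trans (le_add_of_nonneg_left hG) hcon.le
        nlinarith [Real.sqrt_nonneg (max K 0)]
      have hBx : B = x * r := by rw [hx]; field_simp
      rw [hBx]
      calc (x * r) ^ 2 = x ^ 2 * q := by rw [← hrr]; ring
        _ ≤ (G + Real.sqrt (max K 0)) ^ 2 * q := by
            refine mul_le_mul_of_nonneg_right ?_ hq
            nlinarith [Real.sqrt_nonneg (max K 0)]

set_option maxHeartbeats 2000000 in
/-- If `L v ∈ ran(V_F^{1/2})` for all `v ∈ 𝓥` and `A_{𝓥,L}` is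
dissipative, then `𝓥 ⊆ D(V_K^{1/2})`. -/
theorem statement8
    (A At V : H →ₗ.[ℂ] H) (D : Submodule ℂ H)
    (hAdense : Dense (A.domain : Set H)) (hAtdense : Dense (At.domain : Set H))
    (hAclosed : A.IsClosed) (hAtclosed : At.IsClosed)
    (hdual : A ≤ At.adjoint)
    (hDA : D ≤ A.domain) (hDAt : D ≤ At.domain)
    (hcoreA : (A.domRestrict D).closure = A)
    (hcoreAt : (At.domRestrict D).closure = At)
    (hdiss : Dissipative A)
    (hVdom : V.domain = D)
    (hV : ∀ (x : H) (hxV : x ∈ V.domain) (hxA : x ∈ A.domain) (hxAt : x ∈ At.domain),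
      V ⟨x, hxV⟩ = (2 * Complex.I)⁻¹ • (A ⟨x, hxA⟩ - At ⟨x, hxAt⟩))
    (𝓥 : Submodule ℂ H) (h𝓥 : 𝓥 ≤ At.adjoint.domain) (h𝓥A : 𝓥 ⊓ A.domain = ⊥)
    (L : 𝓥 →ₗ[ℂ] H)
    (WF WK : H →ₗ.[ℂ] H)
    (hWF : IsFriedrichsSqrt V WF) (hWK : IsKreinSqrt V WK)
    (hL : ∀ v : 𝓥, ∃ (g : H) (hg : g ∈ WF.domain), WF ⟨g, hg⟩ = L v)
    (hdissext : (∀ (f : A.domain) (v : 𝓥) (hfv : (f : H) + (v : H) ∈ At.adjoint.domain),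
      0 ≤ (⟪(f : H) + (v : H), At.adjoint ⟨(f : H) + (v : H), hfv⟩ + L v⟫).im)) :
    ∀ v : 𝓥, (v : H) ∈ WK.domain := by
  intro v
  classical
  obtain ⟨g, hg, hgL⟩ := hL v
  have hWFadj : WF.adjoint = WF := hWF.1
  have hWFdense : Dense (WF.domain : Set H) := hWF.1.dense_domain
  have hWFfa : WF.IsFormalAdjoint WF := by
    have h := WF.adjoint_isFormalAdjoint hWFdense
    rw [hWFadj] at h
    exact h
  have hAtfa : At.adjoint.IsFormalAdjoint At := At.adjoint_isFormalAdjoint hAtdense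
  obtain ⟨Tm, hsq, hTsa, hTnn, hVT⟩ := hWF.2.2.1
  set vd : At.adjoint.domain := ⟨(v : H), h𝓥 v.2⟩ with hvd
  set K : ℝ := (⟪(v : H), At.adjoint vd⟫ + ⟪(v : H), L v⟫).im with hK
  have hC0 : (0 : ℝ) ≤ (‖g‖ + Real.sqrt (max K 0)) ^ 2 := sq_nonneg _
  have main : ∀ f : V.domain,
      ‖⟪(v : H), V f⟫‖ ^ 2 ≤ (‖g‖ + Real.sqrt (max K 0)) ^ 2 * (⟪(f : H), V f⟫).re := by
    intro f
    have hfD : (f : H) ∈ D := hVdom ▸ f.2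
    set fA : A.domain := ⟨(f : H), hDA hfD⟩ with hfA
    set fAt : At.domain := ⟨(f : H), hDAt hfD⟩ with hfAt
    set fd : At.adjoint.domain := ⟨(f : H), hdual.1 fA.2⟩ with hfd
    have hfT : (f : H) ∈ Tm.domain := hVT.1 f.2
    obtain ⟨hfW, hWfW⟩ := (hsq.1 (f : H)).mp hfT
    set a : ℂ := ⟪(f : H), A fA⟫ with haa
    set b : ℂ := ⟪(v : H), V f⟫ with hbb
    set m : ℂ := ⟪(v : H), At fAt⟫ with hmm
    set n : ℂ := ⟪(v : H), A fA⟫ with hnn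
    set l : ℂ := ⟪(f : H), L v⟫ with hll
    set q : ℝ := (⟪(f : H), V f⟫).re with hqq
    have hVf : V f = (2 * Complex.I)⁻¹ • (A fA - At fAt) := hV (f : H) f.2 fA.2 fAt.2
    have h2I : (2 * Complex.I) ≠ 0 := by simp [Complex.I_ne_zero]
    have hAsub : A fA - At fAt = (2 * Complex.I) • V f := by
      rw [hVf, smul_smul, mul_inv_cancel₀ h2I, one_smul]
    have hAfd : A fA = At.adjoint fd := hdual.2 (x := fA) (y := fd) rfl
    have hconj_a : ⟪(f : H), At fAt⟫ = (starRingEnd ℂ) a := by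
      have h1 := hAtfa fd fAt
      rw [← hAfd] at h1
      rw [← h1, haa, ← inner_conj_symm]
    have hfVf : ⟪(f : H), V f⟫ = (a.im : ℂ) := by
      rw [Complex.im_eq_sub_conj, div_eq_inv_mul, hVf, inner_smul_right, inner_sub_right,
        hconj_a, haa]
    have hq_im : q = a.im := by rw [hqq, hfVf, Complex.ofReal_re]
    have hq0 : 0 ≤ q := by rw [hq_im]; exact hdiss fA
    have hn : n = m + 2 * Complex.I * b := by
      have h1 : n - m = ⟪(v : H), A fA - At fAt⟫ := (inner_sub_right _ _ _).symm
      rw [hAsub, inner_smul_right] at h1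
      linear_combination h1
    have hWnorm : ‖WF ⟨(f : H), hfW⟩‖ ^ 2 = q := by
      have h2 := hWFfa ⟨(f : H), hfW⟩ ⟨WF ⟨(f : H), hfW⟩, hWfW⟩
      rw [← hsq.2 (f : H) hfT hfW hWfW] at h2
      have h3 : Tm ⟨(f : H), hfT⟩ = V f := (hVT.2 (x := f) (y := ⟨(f : H), hfT⟩) rfl).symm
      rw [h3] at h2
      have h4 : ((‖WF ⟨(f : H), hfW⟩‖ ^ 2 : ℝ) : ℂ) = ⟪(f : H), V f⟫ := by
        rw [← h2, inner_self_eq_norm_sq_to_K]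
        norm_cast
      have h5 := congrArg Complex.re h4
      rw [Complex.ofReal_re] at h5
      exact h5
    have hsqrtq : Real.sqrt q = ‖WF ⟨(f : H), hfW⟩‖ := by
      rw [← hWnorm, Real.sqrt_sq (norm_nonneg _)]
    have hl_bound : ‖l‖ ≤ Real.sqrt q * ‖g‖ := by
      rw [hll, ← hgL, ← hWFfa ⟨(f : H), hfW⟩ ⟨g, hg⟩, hsqrtq]
      exact norm_inner_le_norm _ _
    have key : ∀ t : ℂ,
        0 ≤ ‖t‖ ^ 2 * q + 2 * (t * b).re + ((starRingEnd ℂ) t * l).im + K := by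
      intro t
      have hmem : ((t • fA : A.domain) : H) + (v : H) ∈ At.adjoint.domain := by
        have hco : ((t • fA : A.domain) : H) = t • (f : H) := rfl
        rw [hco]
        exact Submodule.add_mem _ (Submodule.smul_mem _ _ (hdual.1 fA.2)) (h𝓥 v.2)
      have h0 := hdissext (t • fA) v hmem
      have hsub : (⟨((t • fA : A.domain) : H) + (v : H), hmem⟩ : At.adjoint.domain)
          = t • fd + vd := by
        apply Subtype.ext
        simp [hfd, hvd]
        rfl
      have heq : ⟪((t • fA : A.domain) : H) + (v : H),
            At.adjoint ⟨((t • fA : A.domain) : H) + (v : H), hmem⟩ + L v⟫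
          = ⟪t • (fA : H) + (v : H), t • A fA + At.adjoint vd + L v⟫ := by
        rw [hsub, LinearPMap.map_add, LinearPMap.map_smul, ← hAfd]
        rfl
      rw [heq] at h0
      have hfAtd : ⟪(fA : H), At.adjoint vd⟫ = (starRingEnd ℂ) m := by
        rw [← inner_conj_symm]
        exact congrArg (starRingEnd ℂ) (hAtfa vd fAt)
      have hexp : ⟪t • (fA : H) + (v : H), t • A fA + At.adjoint vd + L v⟫
          = (starRingEnd ℂ) t * t * a + ((starRingEnd ℂ) t * (starRingEnd ℂ) m + t * n)
            + (starRingEnd ℂ) t * l + (⟪(v : H), At.adjoint vd⟫ + ⟪(v : H), L v⟫) := by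
        have hcoe : (fA : H) = (f : H) := rfl
        rw [hcoe] at hfAtd
        simp only [inner_add_left, inner_add_right, inner_smul_left, inner_smul_right,
          hfAtd, hcoe, ← haa, ← hnn, ← hll]
        ring
      rw [hexp] at h0
      have hnt : ‖t‖ ^ 2 = t.re ^ 2 + t.im ^ 2 := by
        rw [← Complex.normSq_eq_norm_sq, Complex.normSq_apply]; ring
      have him : ((starRingEnd ℂ) t * t * a + ((starRingEnd ℂ) t * (starRingEnd ℂ) m + t * n)
            + (starRingEnd ℂ) t * l + (⟪(v : H), At.adjoint vd⟫ + ⟪(v : H), L v⟫)).im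
          = ‖t‖ ^ 2 * q + 2 * (t * b).re + ((starRingEnd ℂ) t * l).im + K := by
        rw [hn, hq_im, hK, hnt]
        simp only [Complex.add_im, Complex.add_re, Complex.mul_im, Complex.mul_re,
          Complex.conj_re, Complex.conj_im, Complex.I_re, Complex.I_im,
          Complex.re_ofNat, Complex.im_ofNat, Complex.sub_re, Complex.sub_im]
        ring
      rw [him] at h0
      exact h0
    have hlim : ∀ t : ℂ, |((starRingEnd ℂ) t * l).im| ≤ ‖t‖ * (Real.sqrt q * ‖g‖) := by
      intro t
      have h1 : |((starRingEnd ℂ) t * l).im| ≤ ‖(starRingEnd ℂ) t * l‖ := by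
        exact Complex.abs_im_le_norm _
      have h2 : ‖(starRingEnd ℂ) t * l‖ ≤ ‖t‖ * (Real.sqrt q * ‖g‖) := by
        rw [norm_mul, RCLike.norm_conj]
        exact mul_le_mul_of_nonneg_left hl_bound (norm_nonneg t)
      exact le_trans h1 h2
    have hs : ∀ s : ℝ, 0 < s → 2 * s * ‖b‖ ≤ s ^ 2 * q + s * Real.sqrt q * ‖g‖ + K := by
      intro s hspos
      have hassoc : s * (Real.sqrt q * ‖g‖) = s * Real.sqrt q * ‖g‖ := (mul_assoc _ _ _).symm
      by_cases hb : b = 0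
      · have h0 := key (s : ℂ)
        have h1 := (abs_le.mp (hlim (s : ℂ))).2
        have h2 : ‖(s : ℂ)‖ = s := by
          rw [Complex.norm_real, Real.norm_eq_abs, abs_of_pos hspos]
        have h3 : ((s : ℂ) * b).re = 0 := by rw [hb, mul_zero, Complex.zero_re]
        rw [h2, h3] at h0
        rw [h2] at h1
        rw [hb, norm_zero, mul_zero]
        linarith
      · have hbpos : 0 < ‖b‖ := norm_pos_iff.mpr hb
        have hbne : ‖b‖ ≠ 0 := hbpos.ne'
        set t : ℂ := -((s / ‖b‖ : ℝ) : ℂ) * (starRingEnd ℂ) b with ht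
        have hnt : ‖t‖ = s := by
          rw [ht, norm_mul, norm_neg, Complex.norm_real, RCLike.norm_conj,
            Real.norm_eq_abs, abs_of_pos (by positivity : (0:ℝ) < s / ‖b‖),
            div_mul_cancel₀ s hbne]
        have hnsq : Complex.normSq b = ‖b‖ ^ 2 := by
          rw [Complex.normSq_eq_norm_sq]
        have htb : (t * b).re = -(s * ‖b‖) := by
          have h4 : (starRingEnd ℂ) b * b = ((Complex.normSq b : ℝ) : ℂ) := by
            rw [mul_comm, Complex.mul_conj]
          have h3 : t * b = -(((s / ‖b‖) * Complex.normSq b : ℝ) : ℂ) := by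
            rw [ht, mul_assoc, h4]
            push_cast
            ring
          rw [h3]
          have h5 : (s / ‖b‖) * Complex.normSq b = s * ‖b‖ := by
            rw [hnsq, pow_two, ← mul_assoc, div_mul_cancel₀ s hbne]
          rw [h5]
          simp
        have h0 := key t
        have h1 := (abs_le.mp (hlim t)).2
        rw [hnt, htb] at h0
        rw [hnt] at h1
        linarith
    have := aux_quadratic q ‖b‖ ‖g‖ K hq0 (norm_nonneg _) (norm_nonneg _) hs
    calc ‖b‖ ^ 2 ≤ (‖g‖ + Real.sqrt (max K 0)) ^ 2 * q := this
      _ = (‖g‖ + Real.sqrt (max K 0)) ^ 2 * (⟪(f : H), V f⟫).re := by rw [hqq]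
  rw [hWK.2.2.2.1]
  unfold anSup
  refine lt_of_le_of_lt (iSup_le fun f => ?_)
    (ENNReal.ofReal_lt_top :
      ENNReal.ofReal ((‖g‖ + Real.sqrt (max K 0)) ^ 2) < ⊤)
  refine ENNReal.div_le_of_le_mul ?_
  rw [← ENNReal.ofReal_mul hC0]
  exact ENNReal.ofReal_le_ofReal (main f.1)
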